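/- arXiv:2011.04129 — 4 statements merged into one kernel-verified Lean document; each statement's English description precedes it below -/
import Mathlib

section
/- Let A be a real tensor of size n1×n2×n3 and B a real tensor of size n2×l×n3, and let C = A∗B be their t-product, i.e. the n1×l×n3 tensor with unfold(C) = bcirc(A)·unfold(B). Then for every k = 1,…,n3 the frontal slices of the DFTs satisfy Ĉ^{(k)} = Â^{(k)} · B̂^{(k)} (matrix product). -/
open Matrix BigOperators Finset Kronecker

noncomputable section

/-- The DFT of a complex third-order tensor (given by its frontal slices) along the
third dimension: `Â⁽ᵏ⁾ = Σₜ ω^(k·t) A⁽ᵗ⁾` with `ω = exp(-2πi/n3)` (0-based indices). -/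
def cdft {n1 n2 n3 : ℕ} (A : Fin n3 → Matrix (Fin n1) (Fin n2) ℂ) :
    Fin n3 → Matrix (Fin n1) (Fin n2) ℂ :=
  fun k => ∑ t : Fin n3,
    (Complex.exp (-(2 * Real.pi * Complex.I) / (n3 : ℂ))) ^ ((k : ℕ) * (t : ℕ)) • A t

/-- The DFT along the third dimension of a real third-order tensor. -/
def rdft {n1 n2 n3 : ℕ} (A : Fin n3 → Matrix (Fin n1) (Fin n2) ℝ) :
    Fin n3 → Matrix (Fin n1) (Fin n2) ℂ :=
  cdft (fun t => (A t).map (fun x => (x : ℂ)))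

/-- The block circulant matrix of a third-order tensor: the (k,l) block is the
frontal slice `A⁽ᵏ⁻ˡ mod n3⁾` (0-based). -/
def bcirc {α : Type*} {n1 n2 n3 : ℕ} (A : Fin n3 → Matrix (Fin n1) (Fin n2) α) :
    Matrix (Fin n3 × Fin n1) (Fin n3 × Fin n2) α :=
  Matrix.of fun p q => A (p.1 - q.1) p.2 q.2

/-- The block diagonal matrix whose diagonal blocks are the frontal slices. -/
def bdiag {α : Type*} [Zero α] {n1 n2 n3 : ℕ} (A : Fin n3 → Matrix (Fin n1) (Fin n2) α) :
    Matrix (Fin n3 × Fin n1) (Fin n3 × Fin n2) α :=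
  Matrix.of fun p q => if p.1 = q.1 then A p.1 p.2 q.2 else 0

/-- `unfold` stacks the frontal slices vertically. -/
def unfoldT {α : Type*} {n1 l n3 : ℕ} (B : Fin n3 → Matrix (Fin n1) (Fin l) α) :
    Matrix (Fin n3 × Fin n1) (Fin l) α :=
  Matrix.of fun p j => B p.1 p.2 j

/-- The t-product `A ∗ B`, determined by `unfold (A ∗ B) = bcirc A * unfold B`. -/
def tprodT {n1 n2 l n3 : ℕ} (A : Fin n3 → Matrix (Fin n1) (Fin n2) ℝ)
    (B : Fin n3 → Matrix (Fin n2) (Fin l) ℝ) : Fin n3 → Matrix (Fin n1) (Fin l) ℝ :=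
  fun k => Matrix.of fun i j => (bcirc A * unfoldT B) (k, i) j

/-- Conjugate transpose of a real tensor: transpose each frontal slice and reverse
the order of the transposed slices 2 through n3 (0-based: slice k ↦ (A(-k))ᵀ). -/
def ctransT {n1 n2 n3 : ℕ} (A : Fin n3 → Matrix (Fin n1) (Fin n2) ℝ) :
    Fin n3 → Matrix (Fin n2) (Fin n1) ℝ :=
  fun k => (A (-k))ᵀ

/-- The identity tensor: identity matrix as first frontal slice, zeros elsewhere. -/
def idT (q n3 : ℕ) [NeZero n3] : Fin n3 → Matrix (Fin q) (Fin q) ℝ :=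
  fun k => if k = 0 then (1 : Matrix (Fin q) (Fin q) ℝ) else 0

/-- The Frobenius norm of a real third-order tensor. -/
def frobT {n1 n2 n3 : ℕ} (A : Fin n3 → Matrix (Fin n1) (Fin n2) ℝ) : ℝ :=
  Real.sqrt (∑ k, ∑ i, ∑ j, (A k i j) ^ 2)

/-- The nuclear norm of a complex matrix: the sum of the square roots of the
eigenvalues of `Mᴴ * M` (i.e. the sum of the singular values). -/
def nuclearNorm {m n : ℕ} (M : Matrix (Fin m) (Fin n) ℂ) : ℝ :=
  ∑ i, Real.sqrt ((Matrix.isHermitian_conjTranspose_mul_self M).eigenvalues i)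

/-- The tensor nuclear norm: `(1/n3) Σₖ ‖Â⁽ᵏ⁾‖₊`. -/
def tnn {n1 n2 n3 : ℕ} (D : Fin n3 → Matrix (Fin n1) (Fin n2) ℝ) : ℝ :=
  (1 / (n3 : ℝ)) * ∑ k, nuclearNorm (rdft D k)

/-- The tensor L_{2,1}-norm: `Σⱼ √(Σᵢ Σₖ D i j k ²)`. -/
def l21 {n1 n2 n3 : ℕ} (D : Fin n3 → Matrix (Fin n1) (Fin n2) ℝ) : ℝ :=
  ∑ j : Fin n2, Real.sqrt (∑ i : Fin n1, ∑ k : Fin n3, (D k i j) ^ 2)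

/-- The n×n DFT matrix with (p,q)-entry `ω^(p·q)`, `ω = exp(-2πi/n)` (0-based). -/
def dftMatrix (n : ℕ) : Matrix (Fin n) (Fin n) ℂ :=
  Matrix.of fun p q =>
    (Complex.exp (-(2 * Real.pi * Complex.I) / (n : ℂ))) ^ ((p : ℕ) * (q : ℕ))

/-- A tensor `Q` is orthogonal if `Q* ∗ Q = Q ∗ Q* = I`. -/
def isOrthogonalT {n n3 : ℕ} [NeZero n3] (Q : Fin n3 → Matrix (Fin n) (Fin n) ℝ) : Prop :=
  tprodT (ctransT Q) Q = idT n n3 ∧ tprodT Q (ctransT Q) = idT n n3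

/-- if `C = A ∗ B` (i.e. `unfold C = bcirc A · unfold B`), then
`Ĉ⁽ᵏ⁾ = Â⁽ᵏ⁾ · B̂⁽ᵏ⁾` for every k. -/
theorem tproduct_dft_slicewise (n1 n2 l n3 : ℕ)
    (A : Fin n3 → Matrix (Fin n1) (Fin n2) ℝ)
    (B : Fin n3 → Matrix (Fin n2) (Fin l) ℝ)
    (C : Fin n3 → Matrix (Fin n1) (Fin l) ℝ)
    (hC : unfoldT C = bcirc A * unfoldT B) :
    ∀ k, rdft C k = rdft A k * rdft B k := by
  intro k
  -- n3 > 0 since `k : Fin n3` exists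
  have hn3 : (n3 : ℕ) ≠ 0 := Fin.pos k |>.ne'
  haveI : NeZero n3 := ⟨hn3⟩
  have hn3c : (n3 : ℂ) ≠ 0 := Nat.cast_ne_zero.mpr hn3
  set ω := Complex.exp (-(2 * Real.pi * Complex.I) / (n3 : ℂ)) with hω
  have hω1 : ω ^ n3 = 1 := by
    rw [hω, ← Complex.exp_nat_mul]
    have : (n3 : ℂ) * (-(2 * Real.pi * Complex.I) / (n3 : ℂ))
        = -(2 * Real.pi * Complex.I) := by
      field_simp
    rw [this]
    rw [show -(2 * Real.pi * Complex.I) = -(2 * ↑Real.pi * Complex.I) by ring]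
    rw [Complex.exp_neg, Complex.exp_two_pi_mul_I, inv_one]
  have hmod : ∀ a : ℕ, ω ^ (a % n3) = ω ^ a := by
    intro a
    conv_rhs => rw [← Nat.mod_add_div a n3, pow_add, pow_mul, hω1, one_pow, mul_one]
  have key : ∀ p q : Fin n3,
      ω ^ ((k : ℕ) * ((p + q : Fin n3) : ℕ)) = ω ^ ((k : ℕ) * (p : ℕ)) * ω ^ ((k : ℕ) * (q : ℕ)) := by
    intro p q
    have ha : (k : ℕ) * ((p : ℕ) + (q : ℕ)) =
        (k : ℕ) * (((p : ℕ) + (q : ℕ)) % n3) + n3 * ((k : ℕ) * (((p : ℕ) + (q : ℕ)) / n3)) := by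
      conv_lhs => rw [← Nat.mod_add_div ((p : ℕ) + (q : ℕ)) n3]
      ring
    have h2 : ω ^ (n3 * ((k : ℕ) * (((p : ℕ) + (q : ℕ)) / n3))) = 1 := by
      rw [pow_mul, hω1, one_pow]
    rw [← pow_add, ← Nat.mul_add, ha, pow_add, h2, mul_one, Fin.val_add]
  have hCk : ∀ r : Fin n3, (C r).map (fun x => (x : ℂ)) =
      ∑ t : Fin n3, (A (r - t)).map (fun x => (x : ℂ)) * (B t).map (fun x => (x : ℂ)) := by
    intro r
    ext i j
    have h1 : C r i j = (bcirc A * unfoldT B) (r, i) j := by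
      have := congrFun (congrFun hC (r, i)) j
      simpa [unfoldT] using this
    simp only [Matrix.map_apply, Matrix.sum_apply, Matrix.mul_apply, h1, bcirc, unfoldT,
      Matrix.of_apply, Fintype.sum_prod_type]
    push_cast
    rfl
  show cdft _ k = cdft _ k * cdft _ k
  simp only [cdft]
  calc (∑ r : Fin n3, ω ^ ((k : ℕ) * (r : ℕ)) • (C r).map (fun x => (x : ℂ)))
      = ∑ r : Fin n3, ∑ t : Fin n3, ω ^ ((k : ℕ) * (r : ℕ)) •
          ((A (r - t)).map (fun x => (x : ℂ)) * (B t).map (fun x => (x : ℂ))) := by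
        simp [hCk, Finset.smul_sum]
    _ = ∑ t : Fin n3, ∑ r : Fin n3, ω ^ ((k : ℕ) * (r : ℕ)) •
          ((A (r - t)).map (fun x => (x : ℂ)) * (B t).map (fun x => (x : ℂ))) := by
        rw [Finset.sum_comm]
    _ = ∑ t : Fin n3, ∑ s : Fin n3, ω ^ ((k : ℕ) * ((s + t : Fin n3) : ℕ)) •
          ((A s).map (fun x => (x : ℂ)) * (B t).map (fun x => (x : ℂ))) := by
        refine Finset.sum_congr rfl fun t _ => ?_
        refine Fintype.sum_equiv (Equiv.subRight t) _ _ fun r => ?_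
        simp [Equiv.subRight]
    _ = ∑ t : Fin n3, ∑ s : Fin n3,
          (ω ^ ((k : ℕ) * (s : ℕ)) • (A s).map (fun x => (x : ℂ))) *
          (ω ^ ((k : ℕ) * (t : ℕ)) • (B t).map (fun x => (x : ℂ))) := by
        refine Finset.sum_congr rfl fun t _ => Finset.sum_congr rfl fun s _ => ?_
        rw [key, ← smul_smul]
        simp only [Matrix.smul_mul, Matrix.mul_smul]
        rw [smul_comm]
    _ = (∑ s : Fin n3, ω ^ ((k : ℕ) * (s : ℕ)) • (A s).map (fun x => (x : ℂ))) *
        (∑ t : Fin n3, ω ^ ((k : ℕ) * (t : ℕ)) • (B t).map (fun x => (x : ℂ))) := by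
        simp_rw [Matrix.mul_sum, Matrix.sum_mul]
end
end

section
/- (T-QR) Every real third-order tensor A of size n1×n2×n3 can be factored as A = Q ∗ R, where Q ∈ ℝ^{n1×n1×n3} is an orthogonal tensor (Q^*∗Q = Q∗Q^* = I) and R ∈ ℝ^{n1×n2×n3} has every frontal slice upper triangular (R_{i,j,k} = 0 whenever i > j). -/
open Matrix BigOperators Finset Kronecker

noncomputable section

section Aux


lemma qr_exists {𝕜 : Type} [RCLike 𝕜] (a b : ℕ) (M : Matrix (Fin a) (Fin b) 𝕜) :
    ∃ (U : Matrix (Fin a) (Fin a) 𝕜) (T : Matrix (Fin a) (Fin b) 𝕜),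
      Uᴴ * U = 1 ∧ U * Uᴴ = 1 ∧ (∀ (i : Fin a) (j : Fin b), (j : ℕ) < (i : ℕ) → T i j = 0) ∧
      M = U * T := by
  classical
  haveI : WellFoundedLT (Fin a) := inferInstance
  let E := EuclideanSpace 𝕜 (Fin a)
  have hdim : Module.finrank 𝕜 E = Fintype.card (Fin a) := by
    simp [E]
  let col : Fin b → E := fun j => (WithLp.toLp 2 (fun i => M i j) : EuclideanSpace 𝕜 (Fin a))
  let f : Fin a → E := fun i => if h : (i : ℕ) < b then col ⟨i, h⟩ else 0
  let B := InnerProductSpace.gramSchmidtOrthonormalBasis hdim f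
  have hUU : (Matrix.of fun p i => B i p : Matrix (Fin a) (Fin a) 𝕜)ᴴ *
      (Matrix.of fun p i => B i p) = 1 := by
    ext i j
    simpa [Matrix.mul_apply, Matrix.one_apply, PiLp.inner_apply, E, mul_comm]
      using (orthonormal_iff_ite.mp B.orthonormal i j)
  refine ⟨Matrix.of fun p i => B i p, Matrix.of fun i j => inner 𝕜 (B i) (col j), hUU,
    mul_eq_one_comm.mp hUU, ?_, ?_⟩
  · intro i j hij
    have hjb : (j : ℕ) < b := j.isLt
    have hlt : ((⟨(j : ℕ), lt_trans hij i.isLt⟩ : Fin a) : ℕ) < (i : ℕ) := hij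
    have hfj : f ⟨(j : ℕ), lt_trans hij i.isLt⟩ = col j := by
      simp only [f, dif_pos hjb]
    have := InnerProductSpace.gramSchmidtOrthonormalBasis_inv_triangular hdim f
      (i := (⟨(j : ℕ), lt_trans hij i.isLt⟩ : Fin a)) (j := i) (Fin.lt_def.mpr hij)
    rw [hfj] at this
    simpa using this
  · ext p j
    have h1 := B.sum_repr (col j)
    have h2 : ∀ i, B.repr (col j) i = inner 𝕜 (B i) (col j) := fun i =>
      B.repr_apply_apply (col j) i
    calc M p j = col j p := rfl
      _ = (∑ i, B.repr (col j) i • B i) p := by rw [h1]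
      _ = ∑ i, B.repr (col j) i * B i p := by
          rw [WithLp.ofLp_sum, Finset.sum_apply]; simp [smul_eq_mul, E]
      _ = ∑ i, B i p * inner 𝕜 (B i) (col j) := by
          simp_rw [h2]; exact Finset.sum_congr rfl fun i _ => mul_comm _ _
      _ = _ := by simp [Matrix.mul_apply]


def zeta (n3 : ℕ) : ℂ := Complex.exp (-(2 * Real.pi * Complex.I) / (n3 : ℂ))

lemma zeta_ne_zero (n3 : ℕ) : zeta n3 ≠ 0 := Complex.exp_ne_zero _

lemma zeta_prim (n3 : ℕ) [NeZero n3] : IsPrimitiveRoot (zeta n3) n3 := by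
  have h := Complex.isPrimitiveRoot_exp n3 (NeZero.ne n3)
  have : zeta n3 = (Complex.exp (2 * Real.pi * Complex.I / n3))⁻¹ := by
    rw [zeta, ← Complex.exp_neg, neg_div]
  rw [this]
  exact h.inv

def chi (n3 : ℕ) (m : ℤ) : ℂ := zeta n3 ^ m

lemma chi_ne_zero (n3 : ℕ) (m : ℤ) : chi n3 m ≠ 0 := zpow_ne_zero _ (zeta_ne_zero n3)

lemma chi_add (n3 : ℕ) (a b : ℤ) : chi n3 (a + b) = chi n3 a * chi n3 b :=
  zpow_add₀ (zeta_ne_zero n3) a b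

lemma chi_zero (n3 : ℕ) : chi n3 0 = 1 := zpow_zero _

lemma chi_eq_one_iff (n3 : ℕ) [NeZero n3] (m : ℤ) : chi n3 m = 1 ↔ (n3 : ℤ) ∣ m :=
  (zeta_prim n3).zpow_eq_one_iff_dvd m

lemma chi_congr (n3 : ℕ) [NeZero n3] {a b : ℤ} (h : (n3 : ℤ) ∣ a - b) :
    chi n3 a = chi n3 b := by
  have : chi n3 (a - b) = 1 := (chi_eq_one_iff n3 _).mpr h
  have h2 : chi n3 a = chi n3 (a - b) * chi n3 b := by
    rw [← chi_add]; ring_nf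
  rw [h2, this, one_mul]

lemma chi_mul_int (n3 : ℕ) (a b : ℤ) : chi n3 (a * b) = chi n3 a ^ b := by
  rw [chi, chi, ← _root_.zpow_mul]

lemma sum_chi (n3 : ℕ) [NeZero n3] (m : ℤ) :
    ∑ t : Fin n3, chi n3 (m * (t : ℤ)) = if (n3 : ℤ) ∣ m then (n3 : ℂ) else 0 := by
  by_cases h : (n3 : ℤ) ∣ m
  · simp only [if_pos h]
    have : ∀ t : Fin n3, chi n3 (m * (t : ℤ)) = 1 := fun t =>
      (chi_eq_one_iff n3 _).mpr (h.mul_right _)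
    simp [this]
  · simp only [if_neg h]
    have hx : chi n3 m ≠ 1 := fun hc => h ((chi_eq_one_iff n3 m).mp hc)
    have hterm : ∀ t : Fin n3, chi n3 (m * (t : ℤ)) = chi n3 m ^ (t : ℕ) := by
      intro t; rw [chi_mul_int, zpow_natCast]
    simp_rw [hterm]
    rw [Fin.sum_univ_eq_sum_range (fun t => chi n3 m ^ t), geom_sum_eq hx]
    have hxn : chi n3 m ^ n3 = 1 := by
      rw [← zpow_natCast, chi, ← _root_.zpow_mul]
      exact (chi_eq_one_iff n3 _).mpr ⟨m, by ring⟩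
    rw [hxn, sub_self, zero_div]

lemma fin_dvd_coe_add (n3 : ℕ) [NeZero n3] (a b : Fin n3) :
    (n3 : ℤ) ∣ ((a : ℤ) + (b : ℤ)) - ((a + b : Fin n3) : ℤ) := by
  have h : ((a + b : Fin n3) : ℕ) = ((a : ℕ) + (b : ℕ)) % n3 := Fin.val_add a b
  have h2 : (((a + b : Fin n3) : ℕ) : ℤ) = ((a : ℤ) + (b : ℤ)) % (n3 : ℤ) := by
    rw [h]; push_cast; ring
  rw [h2, Int.emod_def]
  ring_nf
  exact Dvd.intro _ rfl

lemma fin_dvd_coe_neg (n3 : ℕ) [NeZero n3] (t : Fin n3) :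
    (n3 : ℤ) ∣ ((-t : Fin n3) : ℤ) + (t : ℤ) := by
  have h := fin_dvd_coe_add n3 (-t) t
  rw [neg_add_cancel] at h
  simpa using h

lemma chi_fin_mul (n3 : ℕ) [NeZero n3] (k t : Fin n3) :
    (zeta n3) ^ ((k : ℕ) * (t : ℕ)) = chi n3 ((k : ℤ) * (t : ℤ)) := by
  rw [chi, ← zpow_natCast]
  push_cast
  ring_nf

lemma cdft_apply {n1 n2 n3 : ℕ} [NeZero n3] (A : Fin n3 → Matrix (Fin n1) (Fin n2) ℂ)
    (k : Fin n3) : cdft A k = ∑ t : Fin n3, chi n3 ((k : ℤ) * (t : ℤ)) • A t := by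
  unfold cdft
  exact Finset.sum_congr rfl fun t _ => by rw [← chi_fin_mul]; rfl

def icdft {n1 n2 n3 : ℕ} (B : Fin n3 → Matrix (Fin n1) (Fin n2) ℂ) :
    Fin n3 → Matrix (Fin n1) (Fin n2) ℂ :=
  fun t => (n3 : ℂ)⁻¹ • ∑ k : Fin n3, chi n3 (-((k : ℤ) * (t : ℤ))) • B k

lemma sum_chi_ortho (n3 : ℕ) [NeZero n3] (k l : Fin n3) :
    ∑ t : Fin n3, chi n3 (((k : ℤ) - (l : ℤ)) * (t : ℤ)) = if k = l then (n3 : ℂ) else 0 := by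
  rw [sum_chi]
  congr 1
  rw [eq_iff_iff]
  constructor
  · intro h
    have hk := k.isLt; have hl := l.isLt
    have hd : (k : ℤ) - (l : ℤ) = 0 := by
      refine Int.eq_zero_of_abs_lt_dvd h ?_
      rw [abs_lt]; omega
    have : (k : ℤ) = (l : ℤ) := by omega
    exact Fin.ext (by exact_mod_cast this)
  · rintro rfl; simp

lemma cdft_icdft {n1 n2 n3 : ℕ} [NeZero n3] (B : Fin n3 → Matrix (Fin n1) (Fin n2) ℂ) :
    cdft (icdft B) = B := by
  funext k
  ext i j
  have hn : (n3 : ℂ) ≠ 0 := by exact_mod_cast (NeZero.ne n3)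
  rw [cdft_apply]
  simp only [icdft, Matrix.sum_apply, Matrix.smul_apply, smul_eq_mul]
  have key : ∀ (t l : Fin n3), chi n3 ((k:ℤ)*(t:ℤ)) * ((n3:ℂ)⁻¹ * (chi n3 (-((l:ℤ)*(t:ℤ))) * B l i j))
      = (n3:ℂ)⁻¹ * (chi n3 (((k:ℤ)-(l:ℤ))*(t:ℤ)) * B l i j) := by
    intro t l
    rw [show ((k:ℤ)-(l:ℤ))*(t:ℤ) = (k:ℤ)*(t:ℤ) + -((l:ℤ)*(t:ℤ)) by ring, chi_add]
    ring
  simp_rw [Finset.mul_sum, key]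
  rw [Finset.sum_comm]
  have key2 : ∀ l : Fin n3, ∑ t : Fin n3, (n3:ℂ)⁻¹ * (chi n3 (((k:ℤ)-(l:ℤ))*(t:ℤ)) * B l i j)
      = (n3:ℂ)⁻¹ * ((∑ t : Fin n3, chi n3 (((k:ℤ)-(l:ℤ))*(t:ℤ))) * B l i j) := by
    intro l
    rw [← Finset.mul_sum, Finset.sum_mul]
  simp_rw [key2, sum_chi_ortho]
  rw [Finset.sum_eq_single k]
  · rw [if_pos rfl, ← mul_assoc, inv_mul_cancel₀ hn, one_mul]
  · intro l _ hl
    rw [if_neg (Ne.symm hl), zero_mul, mul_zero]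
  · intro h; exact absurd (Finset.mem_univ k) h

lemma icdft_cdft {n1 n2 n3 : ℕ} [NeZero n3] (A : Fin n3 → Matrix (Fin n1) (Fin n2) ℂ) :
    icdft (cdft A) = A := by
  funext t
  ext i j
  have hn : (n3 : ℂ) ≠ 0 := by exact_mod_cast (NeZero.ne n3)
  simp only [icdft, Matrix.sum_apply, Matrix.smul_apply, smul_eq_mul]
  have h1 : ∀ k : Fin n3, (cdft A k) i j = ∑ s : Fin n3, chi n3 ((k:ℤ)*(s:ℤ)) * A s i j := by
    intro k
    rw [cdft_apply]
    simp [Matrix.sum_apply, Matrix.smul_apply, smul_eq_mul]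
  simp_rw [h1]
  have key : ∀ (k s : Fin n3), (n3:ℂ)⁻¹ * (chi n3 (-((k:ℤ)*(t:ℤ))) * (chi n3 ((k:ℤ)*(s:ℤ)) * A s i j))
      = (n3:ℂ)⁻¹ * (chi n3 (((s:ℤ)-(t:ℤ))*(k:ℤ)) * A s i j) := by
    intro k s
    rw [show ((s:ℤ)-(t:ℤ))*(k:ℤ) = -((k:ℤ)*(t:ℤ)) + (k:ℤ)*(s:ℤ) by ring, chi_add]
    ring
  simp_rw [Finset.mul_sum, key]
  rw [Finset.sum_comm]
  have key2 : ∀ s : Fin n3, ∑ k : Fin n3, (n3:ℂ)⁻¹ * (chi n3 (((s:ℤ)-(t:ℤ))*(k:ℤ)) * A s i j)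
      = (n3:ℂ)⁻¹ * ((∑ k : Fin n3, chi n3 (((s:ℤ)-(t:ℤ))*(k:ℤ))) * A s i j) := by
    intro s
    rw [← Finset.mul_sum, Finset.sum_mul]
  simp_rw [key2, sum_chi_ortho]
  rw [Finset.sum_eq_single t]
  · rw [if_pos rfl, ← mul_assoc, inv_mul_cancel₀ hn, one_mul]
  · intro l _ hl
    rw [if_neg hl, zero_mul, mul_zero]
  · intro h; exact absurd (Finset.mem_univ t) h

lemma cdft_injective {n1 n2 n3 : ℕ} [NeZero n3] :
    Function.Injective (cdft (n1 := n1) (n2 := n2) (n3 := n3)) := by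
  intro X Y h
  have := congrArg icdft h
  rwa [icdft_cdft, icdft_cdft] at this


variable {n1 n2 n3 : ℕ}

lemma cdft_entry [NeZero n3] (A : Fin n3 → Matrix (Fin n1) (Fin n2) ℂ) (k : Fin n3)
    (i : Fin n1) (j : Fin n2) :
    cdft A k i j = ∑ t : Fin n3, chi n3 ((k : ℤ) * (t : ℤ)) * A t i j := by
  rw [cdft_apply]
  simp [Matrix.sum_apply, Matrix.smul_apply, smul_eq_mul]

lemma icdft_entry (V : Fin n3 → Matrix (Fin n1) (Fin n2) ℂ) (t : Fin n3)
    (i : Fin n1) (j : Fin n2) :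
    icdft V t i j = (n3 : ℂ)⁻¹ * ∑ k : Fin n3, chi n3 (-((k : ℤ) * (t : ℤ))) * V k i j := by
  simp [icdft, Matrix.sum_apply, Matrix.smul_apply, smul_eq_mul, Finset.mul_sum]

lemma chi_conj (n3 : ℕ) (m : ℤ) : (starRingEnd ℂ) (chi n3 m) = chi n3 (-m) := by
  have hz : (starRingEnd ℂ) (zeta n3) = (zeta n3)⁻¹ := by
    rw [zeta, ← Complex.exp_conj, ← Complex.exp_neg]
    congr 1
    simp only [map_div₀, map_neg, _root_.map_mul, Complex.conj_I, Complex.conj_ofReal,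
      map_ofNat, Complex.conj_natCast]
    ring
  rw [chi, chi, map_zpow₀, hz, _root_.inv_zpow, ← _root_.zpow_neg]

lemma chi_neg_mul [NeZero n3] (m : Fin n3) (t : ℤ) :
    chi n3 (((-m : Fin n3) : ℤ) * t) = chi n3 (-((m : ℤ) * t)) := by
  refine chi_congr n3 ?_
  have h := fin_dvd_coe_neg n3 m
  have : ((-m : Fin n3) : ℤ) * t - -((m : ℤ) * t) = (((-m : Fin n3) : ℤ) + (m : ℤ)) * t := by ring
  rw [this]
  exact h.mul_right t

/-- entry lemma for `rdft`. -/
lemma rdft_entry [NeZero n3] (A : Fin n3 → Matrix (Fin n1) (Fin n2) ℝ) (k : Fin n3)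
    (i : Fin n1) (j : Fin n2) :
    rdft A k i j = ∑ t : Fin n3, chi n3 ((k : ℤ) * (t : ℤ)) * (A t i j : ℂ) := by
  rw [rdft, cdft_entry]
  rfl

lemma rdft_neg [NeZero n3] (A : Fin n3 → Matrix (Fin n1) (Fin n2) ℝ) (k : Fin n3) :
    rdft A (-k) = (rdft A k).map (starRingEnd ℂ) := by
  ext i j
  rw [Matrix.map_apply, rdft_entry, rdft_entry, map_sum (starRingEnd ℂ) _ _]
  refine Finset.sum_congr rfl fun t _ => ?_
  rw [_root_.map_mul, chi_conj, Complex.conj_ofReal,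
    show ((-k : Fin n3):ℤ) * (t:ℤ) = ((-k : Fin n3):ℤ) * (t:ℤ) from rfl, chi_neg_mul]

lemma map_conj_conj (M : Matrix (Fin n1) (Fin n2) ℂ) :
    (M.map (starRingEnd ℂ)).map (starRingEnd ℂ) = M := by
  ext i j; simp

lemma conjTranspose_map_conj (M : Matrix (Fin n1) (Fin n2) ℂ) :
    (M.map (starRingEnd ℂ))ᴴ = Mᴴ.map (starRingEnd ℂ) := by
  ext i j; simp [Matrix.conjTranspose_apply, Matrix.map_apply]

lemma map_coe_conj (W : Matrix (Fin n1) (Fin n2) ℝ) :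
    (W.map (fun x : ℝ => (x : ℂ))).map (starRingEnd ℂ) = W.map (fun x : ℝ => (x : ℂ)) := by
  ext i j; simp [Matrix.map_apply, Complex.conj_ofReal]

lemma map_re_coe {M : Matrix (Fin n1) (Fin n2) ℂ} (h : M.map (starRingEnd ℂ) = M) :
    (M.map Complex.re).map (fun x : ℝ => (x : ℂ)) = M := by
  ext i j
  have := congrFun (congrFun (congrArg (fun N => (N : Matrix _ _ ℂ)) h) i) j
  simp only [Matrix.map_apply] at this ⊢
  exact Complex.conj_eq_iff_re.mp this

lemma sum_comm3 {α : Type*} [AddCommMonoid α] {a b c : ℕ} (f : Fin a → Fin b → Fin c → α) :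
    ∑ s : Fin a, ∑ u : Fin b, ∑ p : Fin c, f s u p
      = ∑ p : Fin c, ∑ u : Fin b, ∑ s : Fin a, f s u p :=
  calc ∑ s : Fin a, ∑ u : Fin b, ∑ p : Fin c, f s u p
      = ∑ u : Fin b, ∑ s : Fin a, ∑ p : Fin c, f s u p := Finset.sum_comm
    _ = ∑ u : Fin b, ∑ p : Fin c, ∑ s : Fin a, f s u p :=
        Finset.sum_congr rfl (fun u _ => Finset.sum_comm)
    _ = ∑ p : Fin c, ∑ u : Fin b, ∑ s : Fin a, f s u p := Finset.sum_comm

/-- conv theorem over ℂ. -/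
lemma cdft_conv {l : ℕ} [NeZero n3] (A : Fin n3 → Matrix (Fin n1) (Fin n2) ℂ)
    (B : Fin n3 → Matrix (Fin n2) (Fin l) ℂ) (k : Fin n3) :
    cdft (fun m => ∑ s : Fin n3, A (m - s) * B s) k = cdft A k * cdft B k := by
  ext i j
  rw [cdft_entry, Matrix.mul_apply]
  have expand : ∀ m : Fin n3,
      (∑ s : Fin n3, A (m - s) * B s) i j = ∑ s : Fin n3, ∑ p : Fin n2, A (m - s) i p * B s p j := by
    intro m
    rw [Matrix.sum_apply]
    exact Finset.sum_congr rfl fun s _ => Matrix.mul_apply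
  simp_rw [expand, Finset.mul_sum]
  rw [Finset.sum_comm]
  have reindex : ∀ s : Fin n3,
      (∑ m : Fin n3, ∑ p : Fin n2, chi n3 ((k:ℤ)*(m:ℤ)) * (A (m - s) i p * B s p j))
      = ∑ u : Fin n3, ∑ p : Fin n2, chi n3 ((k:ℤ)*((u + s : Fin n3):ℤ)) * (A u i p * B s p j) := by
    intro s
    rw [← Equiv.sum_comp (Equiv.addRight s) (fun m => ∑ p : Fin n2, chi n3 ((k:ℤ)*(m:ℤ)) * (A (m - s) i p * B s p j))]
    refine Finset.sum_congr rfl fun u _ => ?_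
    refine Finset.sum_congr rfl fun p _ => ?_
    simp [Equiv.addRight]
  simp_rw [reindex]
  have key : ∀ (s u : Fin n3) (p : Fin n2),
      chi n3 ((k:ℤ)*((u + s : Fin n3):ℤ)) * (A u i p * B s p j)
      = (chi n3 ((k:ℤ)*(u:ℤ)) * A u i p) * (chi n3 ((k:ℤ)*(s:ℤ)) * B s p j) := by
    intro s u p
    have hc : chi n3 ((k:ℤ)*((u + s : Fin n3):ℤ)) = chi n3 ((k:ℤ)*(u:ℤ)) * chi n3 ((k:ℤ)*(s:ℤ)) := by
      rw [← chi_add]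
      refine chi_congr n3 ?_
      have h := fin_dvd_coe_add n3 u s
      have : (k:ℤ)*((u + s : Fin n3):ℤ) - ((k:ℤ)*(u:ℤ) + (k:ℤ)*(s:ℤ))
          = -((k:ℤ) * (((u:ℤ) + (s:ℤ)) - ((u + s : Fin n3):ℤ))) := by ring
      rw [this]
      exact dvd_neg.mpr (h.mul_left (k:ℤ))
    rw [hc]; ring
  simp_rw [key]
  have hR : ∀ p : Fin n2, cdft A k i p * cdft B k p j
      = ∑ u : Fin n3, ∑ s : Fin n3,
        (chi n3 ((k:ℤ)*(u:ℤ)) * A u i p) * (chi n3 ((k:ℤ)*(s:ℤ)) * B s p j) := by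
    intro p
    rw [cdft_entry, cdft_entry, Finset.sum_mul_sum]
  have hR2 : (∑ p : Fin n2, cdft A k i p * cdft B k p j)
      = ∑ p : Fin n2, ∑ u : Fin n3, ∑ s : Fin n3,
        (chi n3 ((k:ℤ)*(u:ℤ)) * A u i p) * (chi n3 ((k:ℤ)*(s:ℤ)) * B s p j) :=
    Finset.sum_congr rfl fun p _ => hR p
  rw [hR2]
  exact sum_comm3 (fun s u p => (chi n3 ((k:ℤ)*(u:ℤ)) * A u i p) * (chi n3 ((k:ℤ)*(s:ℤ)) * B s p j))

lemma tprodT_eq_conv {l : ℕ} [NeZero n3] (A : Fin n3 → Matrix (Fin n1) (Fin n2) ℝ)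
    (B : Fin n3 → Matrix (Fin n2) (Fin l) ℝ) (k : Fin n3) :
    tprodT A B k = ∑ m : Fin n3, A (k - m) * B m := by
  ext i j
  simp only [tprodT, Matrix.of_apply, Matrix.mul_apply, Matrix.sum_apply]
  rw [Fintype.sum_prod_type]
  refine Finset.sum_congr rfl fun m _ => ?_
  refine Finset.sum_congr rfl fun s _ => ?_
  simp [bcirc, unfoldT]

lemma cpx_conv {l : ℕ} [NeZero n3] (A : Fin n3 → Matrix (Fin n1) (Fin n2) ℝ)
    (B : Fin n3 → Matrix (Fin n2) (Fin l) ℝ) :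
    (fun t => (tprodT A B t).map (fun x : ℝ => (x : ℂ)))
      = fun m => ∑ s : Fin n3, (A (m - s)).map (fun x : ℝ => (x : ℂ)) * (B s).map (fun x : ℝ => (x : ℂ)) := by
  funext m
  rw [tprodT_eq_conv]
  ext i j
  simp only [Matrix.map_apply, Matrix.sum_apply, Matrix.mul_apply]
  push_cast
  rfl

lemma rdft_tprod {l : ℕ} [NeZero n3] (A : Fin n3 → Matrix (Fin n1) (Fin n2) ℝ)
    (B : Fin n3 → Matrix (Fin n2) (Fin l) ℝ) (k : Fin n3) :
    rdft (tprodT A B) k = rdft A k * rdft B k := by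
  rw [rdft, cpx_conv]
  have h := cdft_conv (n3 := n3) (fun u => (A u).map (fun x : ℝ => (x : ℂ)))
    (fun u => (B u).map (fun x : ℝ => (x : ℂ))) k
  exact h

lemma rdft_idT {q : ℕ} [NeZero n3] (k : Fin n3) : rdft (idT q n3) k = 1 := by
  rw [rdft, cdft_apply]
  rw [Finset.sum_eq_single (0 : Fin n3)]
  · simp [idT, chi_zero, Matrix.map_one]
  · intro t _ ht
    simp [idT, ht, Matrix.map_zero]
  · intro h; exact absurd (Finset.mem_univ 0) h

lemma rdft_ctrans [NeZero n3] (Q : Fin n3 → Matrix (Fin n1) (Fin n2) ℝ) (k : Fin n3) :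
    rdft (ctransT Q) k = (rdft Q k)ᴴ := by
  ext i j
  rw [rdft_entry, Matrix.conjTranspose_apply, rdft_entry,
    show (star : ℂ → ℂ) = ⇑(starRingEnd ℂ) from rfl, map_sum (starRingEnd ℂ) _ _]
  rw [← Equiv.sum_comp (Equiv.neg (Fin n3)) (fun t => chi n3 ((k:ℤ)*(t:ℤ)) * ((ctransT Q t i j : ℝ) : ℂ))]
  refine Finset.sum_congr rfl fun t _ => ?_
  simp only [Equiv.neg_apply, ctransT, neg_neg, Matrix.transpose_apply]
  rw [_root_.map_mul, chi_conj, Complex.conj_ofReal]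
  congr 1
  rw [show (k:ℤ)*(((-t : Fin n3)):ℤ) = ((-t : Fin n3):ℤ) * (k:ℤ) by ring, chi_neg_mul]
  ring_nf

lemma rdft_injective [NeZero n3] :
    Function.Injective (rdft (n1 := n1) (n2 := n2) (n3 := n3)) := by
  intro X Y h
  have h2 := cdft_injective h
  funext t
  ext i j
  have := congrFun (congrFun (congrArg (fun F => F t) h2) i) j
  simpa [Matrix.map_apply, Complex.ofReal_inj] using this

/-- realize a conjugate-symmetric family via inverse DFT. -/
lemma rdft_realize [NeZero n3] (V : Fin n3 → Matrix (Fin n1) (Fin n2) ℂ)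
    (hV : ∀ k, V (-k) = (V k).map (starRingEnd ℂ)) :
    rdft (fun t => (icdft V t).map Complex.re) = V := by
  have hreal : ∀ t, ((icdft V t).map Complex.re).map (fun x : ℝ => (x : ℂ)) = icdft V t := by
    intro t
    refine map_re_coe ?_
    ext i j
    rw [Matrix.map_apply, icdft_entry, _root_.map_mul, map_sum (starRingEnd ℂ) _ _]
    congr 1
    · simp
    rw [← Equiv.sum_comp (Equiv.neg (Fin n3)) (fun k => chi n3 (-((k:ℤ)*(t:ℤ))) * V k i j)]
    refine Finset.sum_congr rfl fun k _ => ?_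
    rw [Equiv.neg_apply, _root_.map_mul, chi_conj, neg_neg]
    have h1 : (starRingEnd ℂ) (V k i j) = V (-k) i j := by
      rw [hV k]; simp [Matrix.map_apply]
    have h2 := chi_neg_mul (n3 := n3) (-k) (((t : ℕ) : ℤ))
    rw [neg_neg] at h2
    rw [h1, h2]
  rw [rdft]
  have : (fun t => ((icdft V t).map Complex.re).map (fun x : ℝ => (x : ℂ))) = icdft V :=
    funext hreal
  rw [this, cdft_icdft]

lemma unitary_map_conj {n : ℕ} {M : Matrix (Fin n) (Fin n) ℂ}
    (h1 : Mᴴ * M = 1) (h2 : M * Mᴴ = 1) :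
    (M.map (starRingEnd ℂ))ᴴ * M.map (starRingEnd ℂ) = 1 ∧
    M.map (starRingEnd ℂ) * (M.map (starRingEnd ℂ))ᴴ = 1 := by
  constructor
  · rw [conjTranspose_map_conj, ← Matrix.map_mul, h1]
    simp [Matrix.map_one]
  · rw [conjTranspose_map_conj, ← Matrix.map_mul, h2]
    simp [Matrix.map_one]

lemma conjTranspose_map_coe {n m : ℕ} (W : Matrix (Fin n) (Fin m) ℝ) :
    (W.map (fun x : ℝ => (x : ℂ)))ᴴ = Wᴴ.map (fun x : ℝ => (x : ℂ)) := by
  ext i j; simp [Matrix.conjTranspose_apply, Matrix.map_apply, Complex.conj_ofReal]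

lemma unitary_map_coe {n : ℕ} {W : Matrix (Fin n) (Fin n) ℝ}
    (h1 : Wᴴ * W = 1) (h2 : W * Wᴴ = 1) :
    (W.map (fun x : ℝ => (x : ℂ)))ᴴ * W.map (fun x : ℝ => (x : ℂ)) = 1 ∧
    W.map (fun x : ℝ => (x : ℂ)) * (W.map (fun x : ℝ => (x : ℂ)))ᴴ = 1 := by
  have hmul : ∀ (X Y : Matrix (Fin n) (Fin n) ℝ),
      (X.map (fun x : ℝ => (x : ℂ))) * (Y.map (fun x : ℝ => (x : ℂ)))
        = (X * Y).map (fun x : ℝ => (x : ℂ)) := by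
    intro X Y
    rw [show (fun x : ℝ => (x : ℂ)) = ⇑Complex.ofRealHom from rfl, Matrix.map_mul]
  constructor
  · rw [conjTranspose_map_coe, hmul, h1]; simp [Matrix.map_one]
  · rw [conjTranspose_map_coe, hmul, h2]; simp [Matrix.map_one]

end Aux

/-- T-QR: every real third-order tensor factors as `A = Q ∗ R`
with Q orthogonal and every frontal slice of R upper triangular. -/

theorem tqr_exists (n1 n2 n3 : ℕ) [NeZero n3]
    (A : Fin n3 → Matrix (Fin n1) (Fin n2) ℝ) :
    ∃ (Q : Fin n3 → Matrix (Fin n1) (Fin n1) ℝ)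
      (R : Fin n3 → Matrix (Fin n1) (Fin n2) ℝ),
      isOrthogonalT Q ∧
      (∀ k (i : Fin n1) (j : Fin n2), (j : ℕ) < (i : ℕ) → R k i j = 0) ∧
      A = tprodT Q R := by
  classical
  -- QR choice functions over ℂ and over ℝ
  let uC : Matrix (Fin n1) (Fin n2) ℂ → Matrix (Fin n1) (Fin n1) ℂ :=
    fun M => (qr_exists n1 n2 M).choose
  let tC : Matrix (Fin n1) (Fin n2) ℂ → Matrix (Fin n1) (Fin n2) ℂ :=
    fun M => (qr_exists n1 n2 M).choose_spec.choose
  have hC : ∀ M : Matrix (Fin n1) (Fin n2) ℂ,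
      (uC M)ᴴ * uC M = 1 ∧ uC M * (uC M)ᴴ = 1 ∧
      (∀ (i : Fin n1) (j : Fin n2), (j : ℕ) < (i : ℕ) → tC M i j = 0) ∧ M = uC M * tC M :=
    fun M => (qr_exists n1 n2 M).choose_spec.choose_spec
  let uR : Matrix (Fin n1) (Fin n2) ℝ → Matrix (Fin n1) (Fin n1) ℝ :=
    fun M => (qr_exists n1 n2 M).choose
  let tR : Matrix (Fin n1) (Fin n2) ℝ → Matrix (Fin n1) (Fin n2) ℝ :=
    fun M => (qr_exists n1 n2 M).choose_spec.choose
  have hRq : ∀ M : Matrix (Fin n1) (Fin n2) ℝ,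
      (uR M)ᴴ * uR M = 1 ∧ uR M * (uR M)ᴴ = 1 ∧
      (∀ (i : Fin n1) (j : Fin n2), (j : ℕ) < (i : ℕ) → tR M i j = 0) ∧ M = uR M * tR M :=
    fun M => (qr_exists n1 n2 M).choose_spec.choose_spec
  -- frequency-domain factors with conjugate symmetry
  let U : Fin n3 → Matrix (Fin n1) (Fin n1) ℂ := fun k =>
    if (k : ℕ) < ((-k : Fin n3) : ℕ) then uC (rdft A k)
    else if ((-k : Fin n3) : ℕ) < (k : ℕ) then (uC (rdft A (-k))).map (starRingEnd ℂ)
    else (uR ((rdft A k).map Complex.re)).map (fun x : ℝ => (x : ℂ))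
  let T : Fin n3 → Matrix (Fin n1) (Fin n2) ℂ := fun k =>
    if (k : ℕ) < ((-k : Fin n3) : ℕ) then tC (rdft A k)
    else if ((-k : Fin n3) : ℕ) < (k : ℕ) then (tC (rdft A (-k))).map (starRingEnd ℂ)
    else (tR ((rdft A k).map Complex.re)).map (fun x : ℝ => (x : ℂ))
  have hself : ∀ k : Fin n3, -k = k → (rdft A k).map (starRingEnd ℂ) = rdft A k := by
    intro k h
    rw [← rdft_neg, h]
  have hselfeq : ∀ k : Fin n3, ¬ (k : ℕ) < ((-k : Fin n3) : ℕ) →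
      ¬ ((-k : Fin n3) : ℕ) < (k : ℕ) → -k = k := by
    intro k h1 h2
    have : ((-k : Fin n3) : ℕ) = (k : ℕ) := by omega
    exact Fin.ext this
  -- branch computations
  have hUa : ∀ k : Fin n3, (k : ℕ) < ((-k : Fin n3) : ℕ) →
      U k = uC (rdft A k) ∧ T k = tC (rdft A k) := by
    intro k hk
    constructor <;> simp only [U, T, if_pos hk]
  have hUb : ∀ k : Fin n3, ((-k : Fin n3) : ℕ) < (k : ℕ) →
      U k = (uC (rdft A (-k))).map (starRingEnd ℂ) ∧
      T k = (tC (rdft A (-k))).map (starRingEnd ℂ) := by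
    intro k hk
    constructor <;>
      simp only [U, T, if_neg (Nat.lt_asymm hk), if_pos hk]
  have hUc : ∀ k : Fin n3, -k = k →
      U k = (uR ((rdft A k).map Complex.re)).map (fun x : ℝ => (x : ℂ)) ∧
      T k = (tR ((rdft A k).map Complex.re)).map (fun x : ℝ => (x : ℂ)) := by
    intro k hk
    have h0 : ((-k : Fin n3) : ℕ) = (k : ℕ) := by rw [hk]
    constructor <;>
      simp only [U, T, h0, lt_irrefl, if_neg (lt_irrefl _), if_false]
  -- conjugate symmetry
  have hsymU : ∀ k : Fin n3, U (-k) = (U k).map (starRingEnd ℂ) ∧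
      T (-k) = (T k).map (starRingEnd ℂ) := by
    intro k
    rcases Nat.lt_trichotomy (k : ℕ) ((-k : Fin n3) : ℕ) with hk | hk | hk
    · -- k < -k : -k falls in branch b
      have hb : ((-(-k) : Fin n3) : ℕ) < ((-k : Fin n3) : ℕ) := by rw [neg_neg]; exact hk
      obtain ⟨e1, e2⟩ := hUb (-k) hb
      obtain ⟨f1, f2⟩ := hUa k hk
      rw [e1, e2, f1, f2, neg_neg]
      exact ⟨rfl, rfl⟩
    · -- -k = k
      have hkk : -k = k := Fin.ext hk.symm
      obtain ⟨f1, f2⟩ := hUc k hkk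
      rw [hkk, f1, f2, map_coe_conj, map_coe_conj]
      exact ⟨rfl, rfl⟩
    · -- -k < k : -k falls in branch a
      have ha : ((-k : Fin n3) : ℕ) < ((-(-k) : Fin n3) : ℕ) := by rw [neg_neg]; exact hk
      obtain ⟨e1, e2⟩ := hUa (-k) ha
      obtain ⟨f1, f2⟩ := hUb k hk
      rw [e1, e2, f1, f2, map_conj_conj, map_conj_conj]
      exact ⟨rfl, rfl⟩
  -- factorization, unitarity, triangularity at each frequency
  have hmulR : ∀ (X : Matrix (Fin n1) (Fin n1) ℝ) (Y : Matrix (Fin n1) (Fin n2) ℝ),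
      (X.map (fun x : ℝ => (x : ℂ))) * (Y.map (fun x : ℝ => (x : ℂ)))
        = (X * Y).map (fun x : ℝ => (x : ℂ)) := by
    intro X Y
    rw [show (fun x : ℝ => (x : ℂ)) = ⇑Complex.ofRealHom from rfl, Matrix.map_mul]
  have hfac : ∀ k : Fin n3, rdft A k = U k * T k := by
    intro k
    rcases Nat.lt_trichotomy (k : ℕ) ((-k : Fin n3) : ℕ) with hk | hk | hk
    · obtain ⟨f1, f2⟩ := hUa k hk
      rw [f1, f2]
      exact (hC (rdft A k)).2.2.2
    · have hkk : -k = k := Fin.ext hk.symm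
      obtain ⟨f1, f2⟩ := hUc k hkk
      rw [f1, f2, hmulR]
      have hre := map_re_coe (hself k hkk)
      conv_lhs => rw [← hre]
      rw [← (hRq ((rdft A k).map Complex.re)).2.2.2]
    · obtain ⟨f1, f2⟩ := hUb k hk
      rw [f1, f2, ← Matrix.map_mul, ← (hC (rdft A (-k))).2.2.2]
      have := rdft_neg A (-k)
      rw [neg_neg] at this
      exact this
  have hunit : ∀ k : Fin n3, (U k)ᴴ * U k = 1 ∧ U k * (U k)ᴴ = 1 := by
    intro k
    rcases Nat.lt_trichotomy (k : ℕ) ((-k : Fin n3) : ℕ) with hk | hk | hk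
    · obtain ⟨f1, _⟩ := hUa k hk
      rw [f1]
      exact ⟨(hC (rdft A k)).1, (hC (rdft A k)).2.1⟩
    · have hkk : -k = k := Fin.ext hk.symm
      obtain ⟨f1, _⟩ := hUc k hkk
      rw [f1]
      exact unitary_map_coe (hRq ((rdft A k).map Complex.re)).1
        (hRq ((rdft A k).map Complex.re)).2.1
    · obtain ⟨f1, _⟩ := hUb k hk
      rw [f1]
      exact unitary_map_conj (hC (rdft A (-k))).1 (hC (rdft A (-k))).2.1
  have htri : ∀ (k : Fin n3) (i : Fin n1) (j : Fin n2), (j : ℕ) < (i : ℕ) → T k i j = 0 := by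
    intro k i j hij
    rcases Nat.lt_trichotomy (k : ℕ) ((-k : Fin n3) : ℕ) with hk | hk | hk
    · rw [(hUa k hk).2]
      exact (hC (rdft A k)).2.2.1 i j hij
    · have hkk : -k = k := Fin.ext hk.symm
      rw [(hUc k hkk).2, Matrix.map_apply, (hRq ((rdft A k).map Complex.re)).2.2.1 i j hij]
      simp
    · rw [(hUb k hk).2, Matrix.map_apply, (hC (rdft A (-k))).2.2.1 i j hij]
      simp
  -- realized tensors
  let Q : Fin n3 → Matrix (Fin n1) (Fin n1) ℝ := fun t => (icdft U t).map Complex.re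
  let R : Fin n3 → Matrix (Fin n1) (Fin n2) ℝ := fun t => (icdft T t).map Complex.re
  have hQ : rdft Q = U := rdft_realize U (fun k => (hsymU k).1)
  have hT : rdft R = T := rdft_realize T (fun k => (hsymU k).2)
  refine ⟨Q, R, ⟨?_, ?_⟩, ?_, ?_⟩
  · apply rdft_injective (n1 := n1) (n2 := n1) (n3 := n3)
    funext k
    rw [rdft_tprod, rdft_ctrans, rdft_idT, congrFun hQ k, (hunit k).1]
  · apply rdft_injective (n1 := n1) (n2 := n1) (n3 := n3)
    funext k
    rw [rdft_tprod, rdft_ctrans, rdft_idT, congrFun hQ k, (hunit k).2]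
  · intro k i j hij
    show (icdft T k i j).re = 0
    rw [icdft_entry]
    have hz : ∀ l : Fin n3, chi n3 (-((l : ℤ) * (k : ℤ))) * T l i j = 0 := by
      intro l
      rw [htri l i j hij, mul_zero]
    rw [Finset.sum_congr rfl fun l _ => hz l]
    simp
  · apply rdft_injective (n1 := n1) (n2 := n2) (n3 := n3)
    funext k
    rw [rdft_tprod, congrFun hQ k, congrFun hT k, ← hfac k]
end
end

section
/- Let D be a real third-order tensor of size n1×n2×n3. Then its tensor nuclear norm is bounded by its tensor L_{2,1}-norm: ‖D‖_* ≤ ‖D‖_{2,1}. -/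
open Matrix BigOperators Finset Kronecker

noncomputable section

lemma root_sum {n3 : ℕ} (hn : n3 ≠ 0) (t s : Fin n3) :
    ∑ k : Fin n3, (Complex.exp (-(2 * Real.pi * Complex.I) / (n3 : ℂ))) ^ ((k : ℕ) * (t : ℕ))
      * (starRingEnd ℂ) ((Complex.exp (-(2 * Real.pi * Complex.I) / (n3 : ℂ))) ^ ((k : ℕ) * (s : ℕ)))
      = if t = s then (n3 : ℂ) else 0 := by
  set ζ : ℂ := Complex.exp (2 * Real.pi * Complex.I / (n3 : ℂ)) with hζdef
  have hζ : IsPrimitiveRoot ζ n3 := Complex.isPrimitiveRoot_exp n3 hn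
  have hζ0 : ζ ≠ 0 := Complex.exp_ne_zero _
  have hω : Complex.exp (-(2 * Real.pi * Complex.I) / (n3 : ℂ)) = ζ⁻¹ := by
    rw [hζdef, ← Complex.exp_neg, neg_div]
  have hconj : (starRingEnd ℂ) (Complex.exp (-(2 * Real.pi * Complex.I) / (n3 : ℂ))) = ζ := by
    rw [← Complex.exp_conj]
    congr 1
    rw [map_div₀, map_neg]
    simp only [_root_.map_mul, map_ofNat, Complex.conj_I, Complex.conj_ofReal, map_natCast]
    ring
  have key : ∀ k : Fin n3,
      (Complex.exp (-(2 * Real.pi * Complex.I) / (n3 : ℂ))) ^ ((k : ℕ) * (t : ℕ))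
        * (starRingEnd ℂ) ((Complex.exp (-(2 * Real.pi * Complex.I) / (n3 : ℂ))) ^ ((k : ℕ) * (s : ℕ)))
      = (ζ ^ ((s : ℤ) - (t : ℤ))) ^ (k : ℕ) := by
    intro k
    rw [_root_.map_pow, hconj, hω, inv_pow, ← zpow_natCast ζ ((k : ℕ) * (s : ℕ)),
      ← zpow_natCast ζ ((k : ℕ) * (t : ℕ)), ← _root_.zpow_neg, ← zpow_add₀ hζ0,
      ← zpow_natCast (ζ ^ ((s : ℤ) - (t : ℤ))), ← _root_.zpow_mul]
    · congr 1
      push_cast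
      ring
  rw [Finset.sum_congr rfl fun k _ => key k]
  by_cases hts : t = s
  · subst hts
    simp
  · rw [if_neg hts]
    have hz1 : ζ ^ ((s : ℤ) - (t : ℤ)) ≠ 1 := by
      intro h
      rw [sub_eq_add_neg, zpow_add₀ hζ0, _root_.zpow_neg, zpow_natCast, zpow_natCast,
        mul_inv_eq_one₀ (pow_ne_zero _ hζ0)] at h
      exact hts (Fin.val_injective (hζ.pow_inj s.2 t.2 h).symm)
    have hzn : (ζ ^ ((s : ℤ) - (t : ℤ))) ^ n3 = 1 := by
      rw [← zpow_natCast (ζ ^ ((s : ℤ) - (t : ℤ))), ← _root_.zpow_mul, mul_comm, _root_.zpow_mul,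
        zpow_natCast, hζ.pow_eq_one, _root_.one_zpow]
    rw [Fin.sum_univ_eq_sum_range (fun k => (ζ ^ ((s : ℤ) - (t : ℤ))) ^ k), geom_sum_eq hz1,
      hzn, sub_self, zero_div]

lemma dft_parseval {n3 : ℕ} (hn : n3 ≠ 0) (x : Fin n3 → ℝ) :
    ∑ k : Fin n3, Complex.normSq (∑ t : Fin n3,
        (Complex.exp (-(2 * Real.pi * Complex.I) / (n3 : ℂ))) ^ ((k : ℕ) * (t : ℕ)) * (x t : ℂ))
      = n3 * ∑ t, (x t) ^ 2 := by
  set ω : ℂ := Complex.exp (-(2 * Real.pi * Complex.I) / (n3 : ℂ)) with hωdef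
  rw [← Complex.ofReal_inj]
  push_cast
  have h1 : ∀ k : Fin n3, ((Complex.normSq (∑ t : Fin n3, ω ^ ((k:ℕ)*(t:ℕ)) * (x t : ℂ)) : ℝ) : ℂ)
      = ∑ t : Fin n3, ∑ s : Fin n3, ((ω ^ ((k:ℕ)*(t:ℕ)) * (starRingEnd ℂ) (ω ^ ((k:ℕ)*(s:ℕ))))
          * ((x t : ℂ) * (x s : ℂ))) := by
    intro k
    rw [← Complex.mul_conj, map_sum, Finset.sum_mul_sum]
    refine Finset.sum_congr rfl fun t _ => Finset.sum_congr rfl fun s _ => ?_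
    rw [_root_.map_mul, Complex.conj_ofReal]
    ring
  rw [Finset.sum_congr rfl fun k _ => h1 k, Finset.sum_comm]
  rw [Finset.sum_congr rfl fun t (_ : t ∈ Finset.univ) => Finset.sum_comm]
  have h2 : ∀ t s : Fin n3, ∑ k : Fin n3,
      ((ω ^ ((k:ℕ)*(t:ℕ)) * (starRingEnd ℂ) (ω ^ ((k:ℕ)*(s:ℕ)))) * ((x t : ℂ) * (x s : ℂ)))
      = (if t = s then (n3 : ℂ) else 0) * ((x t : ℂ) * (x s : ℂ)) := by
    intro t s
    rw [← Finset.sum_mul, root_sum hn t s]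
  rw [Finset.sum_congr rfl fun t (_ : t ∈ Finset.univ) =>
    Finset.sum_congr rfl fun s _ => h2 t s]
  simp only [ite_mul, zero_mul, Finset.sum_ite_eq, Finset.mem_univ, if_true]
  rw [← Finset.mul_sum]
  congr 1
  exact Finset.sum_congr rfl fun t _ => by ring

lemma rdft_apply {n1 n2 n3 : ℕ} (D : Fin n3 → Matrix (Fin n1) (Fin n2) ℝ)
    (k : Fin n3) (i : Fin n1) (j : Fin n2) :
    rdft D k i j = ∑ t : Fin n3,
      (Complex.exp (-(2 * Real.pi * Complex.I) / (n3 : ℂ))) ^ ((k : ℕ) * (t : ℕ)) * (D t i j : ℂ) := by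
  simp [rdft, cdft, Matrix.sum_apply, Matrix.map_apply]


lemma nuclearNorm_le_col {m n : ℕ} (M : Matrix (Fin m) (Fin n) ℂ) :
    nuclearNorm M ≤ ∑ j, Real.sqrt (∑ i, Complex.normSq (M i j)) := by
  have hA := Matrix.isHermitian_conjTranspose_mul_self M
  set lam := hA.eigenvalues with hlam
  set U : Matrix (Fin n) (Fin n) ℂ := (hA.eigenvectorUnitary : Matrix (Fin n) (Fin n) ℂ) with hU
  set w : Fin n → Fin n → ℝ := fun j i => Complex.normSq (U j i) with hw
  have hwnn : ∀ j i, 0 ≤ w j i := fun j i => Complex.normSq_nonneg _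
  have hlnn : ∀ i, 0 ≤ lam i := fun i => Matrix.eigenvalues_conjTranspose_mul_self_nonneg M i
  -- rows of U have unit norm : from U * Uᴴ = 1
  have hUU : U * Uᴴ = 1 := by
    have := hA.eigenvectorUnitary.2
    rw [Matrix.mem_unitaryGroup_iff] at this
    simpa [hU, Matrix.star_eq_conjTranspose] using this
  have hUU' : Uᴴ * U = 1 := by
    have := hA.eigenvectorUnitary.2
    rw [Matrix.mem_unitaryGroup_iff'] at this
    simpa [hU, Matrix.star_eq_conjTranspose] using this
  have hrow : ∀ j, ∑ i, w j i = 1 := by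
    intro j
    have := congrFun (congrFun hUU j) j
    simp [Matrix.mul_apply, Matrix.one_apply, Matrix.conjTranspose_apply, Complex.mul_conj] at this
    have := congrArg Complex.re this
    simpa [Complex.normSq, hw] using this
  have hcol : ∀ i, ∑ j, w j i = 1 := by
    intro i
    have := congrFun (congrFun hUU' i) i
    simp [Matrix.mul_apply, Matrix.one_apply, Matrix.conjTranspose_apply, ← Complex.normSq_eq_conj_mul_self] at this
    have := congrArg Complex.re this
    simpa [Complex.normSq, hw] using this
  have hdiag : ∀ j, ∑ i, Complex.normSq (M i j) = ∑ i, lam i * w j i := by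
    intro j
    have h1 := congrFun (congrFun hA.spectral_theorem j) j
    have h2 : (Mᴴ * M) j j = ((∑ i, Complex.normSq (M i j) : ℝ) : ℂ) := by
      rw [Matrix.mul_apply, Complex.ofReal_sum]
      exact Finset.sum_congr rfl fun i _ => by
        rw [Matrix.conjTranspose_apply]
        exact Complex.normSq_eq_conj_mul_self.symm
    rw [h2] at h1
    simp only [Unitary.conjStarAlgAut_apply, Matrix.mul_apply, Matrix.diagonal_apply, Matrix.star_apply, Function.comp_apply,
      Finset.sum_ite_eq, Finset.sum_ite_eq', Finset.mem_univ, if_true, mul_ite, mul_zero,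
      ite_mul, zero_mul] at h1
    have h3 : ∀ x, (hA.eigenvectorUnitary : Matrix (Fin n) (Fin n) ℂ) j x
          * (RCLike.ofReal (hA.eigenvalues x) : ℂ)
          * star ((hA.eigenvectorUnitary : Matrix (Fin n) (Fin n) ℂ) j x)
        = ((lam x * w j x : ℝ) : ℂ) := by
      intro x
      rw [Complex.star_def, mul_comm ((hA.eigenvectorUnitary : Matrix (Fin n) (Fin n) ℂ) j x),
        mul_assoc, Complex.mul_conj, RCLike.ofReal_alg]
      rw [hw, hU, Complex.real_smul]
      push_cast
      ring
    simp only [h3, ← Complex.ofReal_sum] at h1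
    exact_mod_cast h1
  calc nuclearNorm M = ∑ i, Real.sqrt (lam i) * (∑ j, w j i) := by
        simp [nuclearNorm, hlam, hrow, hcol]
    _ = ∑ j, ∑ i, Real.sqrt (lam i) * w j i := by
        rw [Finset.sum_comm]
        simp [Finset.mul_sum]
    _ ≤ ∑ j, Real.sqrt (∑ i, Complex.normSq (M i j)) := by
        refine Finset.sum_le_sum fun j _ => ?_
        have := Real.sum_sqrt_mul_sqrt_le (f := fun i => lam i * w j i) (g := fun i => w j i)
          Finset.univ (fun i => mul_nonneg (hlnn i) (hwnn j i)) (fun i => hwnn j i)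
        have heq : ∀ i, Real.sqrt (lam i * w j i) * Real.sqrt (w j i)
            = Real.sqrt (lam i) * w j i := by
          intro i
          rw [Real.sqrt_mul (hlnn i), mul_assoc, Real.mul_self_sqrt (hwnn j i)]
        rw [Finset.sum_congr rfl (fun i _ => heq i)] at this
        rw [hrow j, Real.sqrt_one, mul_one, ← hdiag j] at this
        exact this

/-- the tensor nuclear norm is bounded by the tensor L_{2,1}-norm. -/
theorem tensor_nuclear_le_l21 (n1 n2 n3 : ℕ)
    (D : Fin n3 → Matrix (Fin n1) (Fin n2) ℝ) :
    tnn D ≤ l21 D := by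
  rcases eq_or_ne n3 0 with h0 | hn
  · subst h0
    simp [tnn, l21]
  have hn3 : (0:ℝ) < n3 := Nat.cast_pos.mpr (Nat.pos_of_ne_zero hn)
  have step1 : tnn D ≤ (1/(n3:ℝ)) * ∑ j : Fin n2, ∑ k : Fin n3,
      Real.sqrt (∑ i, Complex.normSq (rdft D k i j)) := by
    rw [Finset.sum_comm]
    exact mul_le_mul_of_nonneg_left
      (Finset.sum_le_sum fun k _ => nuclearNorm_le_col (rdft D k)) (by positivity)
  have step2 : ∀ j : Fin n2, ∑ k : Fin n3, Real.sqrt (∑ i, Complex.normSq (rdft D k i j))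
      ≤ (n3:ℝ) * Real.sqrt (∑ i : Fin n1, ∑ t : Fin n3, (D t i j)^2) := by
    intro j
    have hsum : ∑ k : Fin n3, ∑ i, Complex.normSq (rdft D k i j)
        = (n3:ℝ) * ∑ i : Fin n1, ∑ t : Fin n3, (D t i j)^2 := by
      rw [Finset.sum_comm, Finset.mul_sum]
      refine Finset.sum_congr rfl fun i _ => ?_
      rw [Finset.sum_congr rfl fun k (_ : k ∈ Finset.univ) => by rw [rdft_apply]]
      exact dft_parseval hn (fun t => D t i j)
    have cs := Real.sum_sqrt_mul_sqrt_le (f := fun k => ∑ i, Complex.normSq (rdft D k i j))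
      (g := fun _ => (1:ℝ)) Finset.univ
      (fun k => Finset.sum_nonneg fun i _ => Complex.normSq_nonneg _) (fun _ => zero_le_one)
    simp only [Real.sqrt_one, mul_one, Finset.sum_const, Finset.card_univ, Fintype.card_fin,
      nsmul_eq_mul] at cs
    calc ∑ k : Fin n3, Real.sqrt (∑ i, Complex.normSq (rdft D k i j))
        ≤ Real.sqrt (∑ k : Fin n3, ∑ i, Complex.normSq (rdft D k i j))
            * Real.sqrt (n3:ℝ) := cs
      _ = (Real.sqrt (n3:ℝ) * Real.sqrt (n3:ℝ))
            * Real.sqrt (∑ i : Fin n1, ∑ t : Fin n3, (D t i j)^2) := by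
          rw [hsum, Real.sqrt_mul (le_of_lt hn3)]
          ring
      _ = (n3:ℝ) * Real.sqrt (∑ i : Fin n1, ∑ t : Fin n3, (D t i j)^2) := by
          rw [Real.mul_self_sqrt (le_of_lt hn3)]
  calc tnn D ≤ (1/(n3:ℝ)) * ∑ j : Fin n2, ∑ k : Fin n3,
        Real.sqrt (∑ i, Complex.normSq (rdft D k i j)) := step1
    _ ≤ (1/(n3:ℝ)) * ∑ j : Fin n2,
        (n3:ℝ) * Real.sqrt (∑ i : Fin n1, ∑ t : Fin n3, (D t i j)^2) := by
        exact mul_le_mul_of_nonneg_left (Finset.sum_le_sum fun j _ => step2 j) (by positivity)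
    _ = l21 D := by
        rw [← Finset.mul_sum, ← mul_assoc, one_div, inv_mul_cancel₀ (ne_of_gt hn3), one_mul]
        rfl
end
end

section
/- A real tensor Q of size n×n×n3 satisfies Q^* ∗ Q = I (the n×n×n3 identity tensor) if and only if for every k = 1,…,n3 the frontal slice Q̂^{(k)} of the DFT of Q along the third dimension is a unitary n×n complex matrix. -/
open Matrix BigOperators Finset Kronecker

noncomputable section

set_option linter.unusedSectionVars false



noncomputable section AuxDFT

namespace AuxDFT

def ω (n3 : ℕ) : ℂ := Complex.exp (-(2 * Real.pi * Complex.I) / (n3 : ℂ))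

variable {n3 : ℕ} [NeZero n3]

lemma ω_pow_n3 : ω n3 ^ n3 = 1 := by
  rw [ω, ← Complex.exp_nat_mul]
  have h : (n3 : ℂ) ≠ 0 := Nat.cast_ne_zero.2 (NeZero.ne n3)
  rw [mul_div_cancel₀ _ h, Complex.exp_neg, Complex.exp_two_pi_mul_I, inv_one]

lemma ω_prim : IsPrimitiveRoot (ω n3) n3 := by
  have h := Complex.isPrimitiveRoot_exp n3 (NeZero.ne n3)
  have : ω n3 = (Complex.exp (2 * Real.pi * Complex.I / n3))⁻¹ := by
    rw [ω, ← Complex.exp_neg, neg_div]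
  rw [this]
  exact h.inv

lemma ω_congr {a b : ℕ} (h : a ≡ b [MOD n3]) : ω n3 ^ a = ω n3 ^ b := by
  rw [pow_eq_pow_mod a (ω_pow_n3 (n3 := n3)), pow_eq_pow_mod b (ω_pow_n3 (n3 := n3)), h]

lemma conj_ω_pow (m : ℕ) : (starRingEnd ℂ) (ω n3 ^ m) = (ω n3 ^ m)⁻¹ := by
  have h : (starRingEnd ℂ) (ω n3) = (ω n3)⁻¹ := by
    have hc : (starRingEnd ℂ) (-(2 * Real.pi * Complex.I) / (n3 : ℂ))
        = -(-(2 * Real.pi * Complex.I) / (n3 : ℂ)) := by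
      simp [map_div₀, Complex.conj_I, Complex.conj_ofReal, map_ofNat]
      ring
    rw [ω, ← Complex.exp_conj, hc, Complex.exp_neg]
  rw [map_pow, h, inv_pow]

lemma sum_ω (t s : Fin n3) :
    ∑ k : Fin n3, ω n3 ^ ((k : ℕ) * (t : ℕ)) * (ω n3 ^ ((k : ℕ) * (s : ℕ)))⁻¹
      = if t = s then (n3 : ℂ) else 0 := by
  set ζ : ℂ := ω n3 ^ (t : ℕ) * (ω n3 ^ (s : ℕ))⁻¹ with hζ
  have hterm : ∀ k : Fin n3,
      ω n3 ^ ((k : ℕ) * (t : ℕ)) * (ω n3 ^ ((k : ℕ) * (s : ℕ)))⁻¹ = ζ ^ (k : ℕ) := by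
    intro k
    rw [hζ, mul_pow, inv_pow, ← pow_mul, ← pow_mul, mul_comm (t : ℕ), mul_comm (s : ℕ)]
  have hζn : ζ ^ n3 = 1 := by
    rw [hζ, mul_pow, inv_pow, ← pow_mul, ← pow_mul, mul_comm (t:ℕ), mul_comm (s:ℕ),
      pow_mul, pow_mul, ω_pow_n3, one_pow, one_pow, inv_one, mul_one]
  simp only [hterm]
  rw [Fin.sum_univ_eq_sum_range (fun i => ζ ^ i) n3]
  by_cases h : t = s
  · subst h
    have : ζ = 1 := by
      rw [hζ, mul_inv_cancel₀]
      exact pow_ne_zero _ ((ω_prim (n3 := n3)).ne_zero (NeZero.ne n3))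
    simp [this]
  · have hζ1 : ζ ≠ 1 := by
      have key : ζ = ω n3 ^ ((t - s : Fin n3) : ℕ) := by
        have hmul : ω n3 ^ ((t - s : Fin n3) : ℕ) * ω n3 ^ (s : ℕ) = ω n3 ^ (t : ℕ) := by
          rw [← pow_add]
          apply ω_congr
          have : (t - s + s : Fin n3) = t := by abel
          calc ((t - s : Fin n3) : ℕ) + (s : ℕ) ≡ ((t - s + s : Fin n3) : ℕ) [MOD n3] := by
                rw [Fin.add_def]
                exact (Nat.mod_modEq _ n3).symm
            _ = (t : ℕ) := by rw [this]
        rw [hζ, ← hmul, mul_assoc, mul_inv_cancel₀, mul_one]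
        exact pow_ne_zero _ ((ω_prim (n3 := n3)).ne_zero (NeZero.ne n3))
      rw [key]
      apply (ω_prim (n3 := n3)).pow_ne_one_of_pos_of_lt
      · have hts : t - s ≠ 0 := fun hc => h (by rwa [sub_eq_zero] at hc)
        exact (fun (hv : ((t - s : Fin n3) : ℕ) = 0) => hts (Fin.val_injective (by simp [hv])))
      · exact (t - s).is_lt
    rw [geom_sum_eq hζ1, hζn, sub_self, zero_div, if_neg h]

end AuxDFT

end AuxDFT



namespace AuxDFT

open AuxDFT

variable {q n n1 n2 l n3 : ℕ}

lemma cdft_eq (A : Fin n3 → Matrix (Fin n1) (Fin n2) ℂ) (k : Fin n3) :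
    cdft A k = ∑ t : Fin n3, ω n3 ^ ((k : ℕ) * (t : ℕ)) • A t := rfl

lemma cdft_injective [NeZero n3] :
    Function.Injective (cdft (n1 := n1) (n2 := n2) (n3 := n3)) := by
  have key : ∀ (M : Fin n3 → Matrix (Fin n1) (Fin n2) ℂ) (s : Fin n3),
      ∑ k : Fin n3, (ω n3 ^ ((k : ℕ) * (s : ℕ)))⁻¹ • cdft M k = (n3 : ℂ) • M s := by
    intro M s
    simp only [cdft_eq, Finset.smul_sum, smul_smul]
    rw [Finset.sum_comm]
    have : ∀ t : Fin n3,
        ∑ k : Fin n3, ((ω n3 ^ ((k : ℕ) * (s : ℕ)))⁻¹ * ω n3 ^ ((k : ℕ) * (t : ℕ))) • M t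
          = (if t = s then (n3 : ℂ) else 0) • M t := by
      intro t
      rw [← Finset.sum_smul]
      congr 1
      rw [← sum_ω t s]
      exact Finset.sum_congr rfl fun k _ => mul_comm _ _
    simp only [this, ite_smul, zero_smul, Finset.sum_ite_eq' Finset.univ s]
    simp
  intro A B h
  funext s
  have hA := key A s
  have hB := key B s
  rw [h] at hA
  have := hA.symm.trans hB
  exact smul_right_injective _ (Nat.cast_ne_zero.2 (NeZero.ne n3) : (n3:ℂ) ≠ 0) this

lemma rdft_injective [NeZero n3] :
    Function.Injective (rdft (n1 := n1) (n2 := n2) (n3 := n3)) := by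
  intro A B h
  have h2 := cdft_injective (n3 := n3) (funext fun k => congrFun h k)
  funext k
  ext i j
  have := congrFun (congrFun (congrFun h2 k) i) j
  simpa using this

lemma tprod_slice (A : Fin n3 → Matrix (Fin n1) (Fin n2) ℝ)
    (B : Fin n3 → Matrix (Fin n2) (Fin l) ℝ) (k : Fin n3) :
    tprodT A B k = ∑ t : Fin n3, A (k - t) * B t := by
  ext i j
  simp only [tprodT, bcirc, unfoldT, Matrix.of_apply, Matrix.mul_apply,
    Matrix.sum_apply, Fintype.sum_prod_type]

lemma rdft_tprod [NeZero n3] (A : Fin n3 → Matrix (Fin n1) (Fin n2) ℝ)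
    (B : Fin n3 → Matrix (Fin n2) (Fin l) ℝ) (k : Fin n3) :
    rdft (tprodT A B) k = rdft A k * rdft B k := by
  unfold rdft
  rw [cdft_eq, cdft_eq, cdft_eq]
  simp only [tprod_slice]
  have hmap : ∀ s : Fin n3, ((∑ t : Fin n3, A (s - t) * B t).map (fun x : ℝ => (x : ℂ)))
      = ∑ t : Fin n3, (A (s - t)).map (fun x : ℝ => (x : ℂ)) * (B t).map (fun x : ℝ => (x : ℂ)) := by
    intro s
    ext i j
    push_cast [Matrix.map_apply, Matrix.sum_apply, Matrix.mul_apply, Finset.mul_sum]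
    rfl
  simp only [hmap, Finset.smul_sum]
  rw [Finset.sum_comm]
  conv_rhs => rw [Matrix.sum_mul]
  simp only [Matrix.smul_mul, Matrix.mul_sum, Matrix.mul_smul, smul_smul, Finset.smul_sum]
  conv_rhs => rw [Finset.sum_comm]
  refine Finset.sum_congr rfl fun t _ => ?_
  rw [← Equiv.sum_comp (Equiv.addLeft t) (fun s =>
    ω n3 ^ ((k : ℕ) * (s : ℕ)) • ((A (s - t)).map (fun x : ℝ => (x : ℂ)) * (B t).map (fun x : ℝ => (x : ℂ))))]
  refine Finset.sum_congr rfl fun u _ => ?_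
  have h1 : (t + u - t : Fin n3) = u := by abel
  have h2 : ω n3 ^ ((k : ℕ) * ((t + u : Fin n3) : ℕ))
      = ω n3 ^ ((k : ℕ) * (u : ℕ)) * ω n3 ^ ((k : ℕ) * (t : ℕ)) := by
    rw [← pow_add]
    apply ω_congr
    calc (k : ℕ) * ((t + u : Fin n3) : ℕ) ≡ (k : ℕ) * ((t : ℕ) + (u : ℕ)) [MOD n3] := by
          apply Nat.ModEq.mul_left
          rw [Fin.add_def]
          exact Nat.mod_modEq _ n3
      _ = (k : ℕ) * (u : ℕ) + (k : ℕ) * (t : ℕ) := by ring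
      _ ≡ (k : ℕ) * (u : ℕ) + (k : ℕ) * (t : ℕ) [MOD n3] := Nat.ModEq.rfl
  simp only [Equiv.coe_addLeft, h1, h2]
  rw [mul_comm (ω n3 ^ ((k : ℕ) * ((u : Fin n3) : ℕ)))]

lemma rdft_ctrans [NeZero n3] (Q : Fin n3 → Matrix (Fin n1) (Fin n2) ℝ) (k : Fin n3) :
    rdft (ctransT Q) k = (rdft Q k)ᴴ := by
  unfold rdft ctransT
  rw [cdft_eq, cdft_eq]
  rw [Matrix.conjTranspose_sum]
  rw [← Equiv.sum_comp (Equiv.neg (Fin n3)) (fun t =>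
    ω n3 ^ ((k : ℕ) * (t : ℕ)) • ((Q (-t))ᵀ).map (fun x : ℝ => (x : ℂ)))]
  refine Finset.sum_congr rfl fun s _ => ?_
  simp only [Equiv.neg_apply, neg_neg]
  have hmap : ((Q s)ᵀ).map (fun x : ℝ => (x : ℂ))
      = ((Q s).map (fun x : ℝ => (x : ℂ)))ᴴ := by
    ext i j
    simp [Matrix.conjTranspose_apply, Complex.conj_ofReal]
  have hsc : ω n3 ^ ((k : ℕ) * ((-s : Fin n3) : ℕ))
      = (starRingEnd ℂ) (ω n3 ^ ((k : ℕ) * (s : ℕ))) := by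
    rw [conj_ω_pow]
    apply eq_inv_of_mul_eq_one_left
    rw [← pow_add]
    have : ((k : ℕ) * ((-s : Fin n3) : ℕ) + (k : ℕ) * (s : ℕ)) ≡ (k : ℕ) * 0 [MOD n3] := by
      have h0 : ((-s : Fin n3) : ℕ) + (s : ℕ) ≡ ((0 : Fin n3) : ℕ) [MOD n3] := by
        have : (-s + s : Fin n3) = 0 := by abel
        calc ((-s : Fin n3) : ℕ) + (s : ℕ) ≡ ((-s + s : Fin n3) : ℕ) [MOD n3] := by
              rw [Fin.add_def]
              exact (Nat.mod_modEq _ n3).symm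
          _ = ((0 : Fin n3) : ℕ) := by rw [this]
      calc (k : ℕ) * ((-s : Fin n3) : ℕ) + (k : ℕ) * (s : ℕ)
            = (k : ℕ) * (((-s : Fin n3) : ℕ) + (s : ℕ)) := by ring
        _ ≡ (k : ℕ) * ((0 : Fin n3) : ℕ) [MOD n3] := Nat.ModEq.mul_left _ h0
        _ = (k : ℕ) * 0 := by simp
    rw [ω_congr this]
    simp
  rw [hmap, hsc, Matrix.conjTranspose_smul]
  rfl

lemma rdft_idT [NeZero n3] (k : Fin n3) : rdft (idT q n3) k = 1 := by
  unfold rdft idT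
  rw [cdft_eq]
  rw [Finset.sum_eq_single 0]
  · simp [Matrix.map_one (fun x : ℝ => (x : ℂ)) Complex.ofReal_zero Complex.ofReal_one]
  · intro t _ ht
    simp [ht]
  · simp

end AuxDFT

/-- `Q* ∗ Q = I` iff every frontal slice of the DFT of Q is unitary. -/
theorem orthogonal_iff_dft_slices_unitary (n n3 : ℕ) [NeZero n3]
    (Q : Fin n3 → Matrix (Fin n) (Fin n) ℝ) :
    tprodT (ctransT Q) Q = idT n n3 ↔
      ∀ k, rdft Q k ∈ Matrix.unitaryGroup (Fin n) ℂ := by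
  constructor
  · intro h k
    rw [Matrix.mem_unitaryGroup_iff', Matrix.star_eq_conjTranspose]
    have h2 := congrArg (fun A => rdft A k) h
    simpa [AuxDFT.rdft_tprod, AuxDFT.rdft_ctrans, AuxDFT.rdft_idT] using h2
  · intro h
    apply AuxDFT.rdft_injective
    funext k
    rw [AuxDFT.rdft_tprod, AuxDFT.rdft_ctrans, AuxDFT.rdft_idT]
    have := Matrix.mem_unitaryGroup_iff'.mp (h k)
    rwa [Matrix.star_eq_conjTranspose] at this
end
end
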